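/- Let f(x_1,...,x_n) be a Boolean function depending on all n of its variables, with n ≥ 1. Then there exists a variable x_i and a value ℓ∈{0,1} such that the function induced from f by fixing x_i = ℓ depends on all remaining n−1 variables. -/

import Mathlib

attribute [local instance] Classical.propDecidable

/-- `b'` extends the partial assignment `b`: it agrees on all non-`*` coordinates of `b`. -/
def Extends {n : ℕ} (b' b : Fin n → Option Bool) : Prop :=
  ∀ i v, b i = some v → b' i = some v

/-- A total assignment `x` extends the partial assignment `b`. -/
def TExtends {n : ℕ} (x : Fin n → Bool) (b : Fin n → Option Bool) : Prop :=
  ∀ i v, b i = some v → x i = v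

/-- `b` is a certificate of `f`: `f` is constant on all total extensions of `b`. -/
def IsCert {n : ℕ} (f : (Fin n → Bool) → Bool) (b : Fin n → Option Bool) : Prop :=
  ∀ x y, TExtends x b → TExtends y b → f x = f y

/-- `b` is a `k`-certificate of `f`: it forces `f` to the value `k`. -/
def IsKCert {n : ℕ} (f : (Fin n → Bool) → Bool) (k : Bool) (b : Fin n → Option Bool) : Prop :=
  ∀ x, TExtends x b → f x = k

/-- A certificate is minimal if no proper restriction of it is a certificate. -/
def MinCert {n : ℕ} (f : (Fin n → Bool) → Bool) (c : Fin n → Option Bool) : Prop :=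
  IsCert f c ∧ ∀ c', Extends c c' → c' ≠ c → ¬ IsCert f c'

/-- A `k`-certificate is minimal if no proper restriction of it is a `k`-certificate. -/
def MinKCert {n : ℕ} (f : (Fin n → Bool) → Bool) (k : Bool) (c : Fin n → Option Bool) : Prop :=
  IsKCert f k c ∧ ∀ c', Extends c c' → c' ≠ c → ¬ IsKCert f k c'

/-- Monotone utility function: filling in `*`'s never decreases the value. -/
def Mono {n : ℕ} (g : (Fin n → Option Bool) → ℕ) : Prop :=
  ∀ b b', Extends b' b → g b ≤ g b'

/-- Submodular utility function: marginal gains shrink under extension. -/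
def Submod {n : ℕ} (g : (Fin n → Option Bool) → ℕ) : Prop :=
  ∀ b b' (i : Fin n) (ℓ : Bool), Extends b' b → b i = none → b' i = none →
    g (Function.update b' i (some ℓ)) + g b ≤ g (Function.update b i (some ℓ)) + g b'

/-- `g` is a goal function for `f` with goal value `Q`. -/
def GoalFn {n : ℕ} (f : (Fin n → Bool) → Bool) (g : (Fin n → Option Bool) → ℕ)
    (Q : ℕ) : Prop :=
  Mono g ∧ Submod g ∧ ∀ b, g b = Q ↔ IsCert f b

/-- `g` is a `k`-goal function for `f` with goal value `Q`. -/
def KGoalFn {n : ℕ} (f : (Fin n → Bool) → Bool) (k : Bool)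
    (g : (Fin n → Option Bool) → ℕ) (Q : ℕ) : Prop :=
  Mono g ∧ Submod g ∧ (∀ b, IsKCert f k b → g b = Q) ∧ (∀ b, ¬ IsKCert f k b → g b < Q)

/-- The goal value `Γ(f)`: the minimum goal value of any goal function for `f`. -/
noncomputable def gamma {n : ℕ} (f : (Fin n → Bool) → Bool) : ℕ :=
  sInf {Q | ∃ g, GoalFn f g Q}

/-- The `k`-goal value `Γ^k(f)`. -/
noncomputable def gammaK {n : ℕ} (f : (Fin n → Bool) → Bool) (k : Bool) : ℕ :=
  sInf {Q | ∃ g, KGoalFn f k g Q}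

/-- The weight of a partial assignment: the number of non-`*` coordinates. -/
noncomputable def wt {n : ℕ} (b : Fin n → Option Bool) : ℕ :=
  (Finset.univ.filter (fun i => (b i).isSome)).card

/-- `f` depends on its `i`-th variable. -/
def DependsOnVar {n : ℕ} (f : (Fin n → Bool) → Bool) (i : Fin n) : Prop :=
  ∃ x, f (Function.update x i true) ≠ f (Function.update x i false)

/-- if `f` depends on all `n ≥ 1` of its variables, then some variable can be
fixed to some value so that the induced function depends on all remaining variables. -/
theorem stmt4 {n : ℕ} (hn : 1 ≤ n) (f : (Fin n → Bool) → Bool)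
    (hdep : ∀ i, DependsOnVar f i) :
    ∃ (i : Fin n) (ℓ : Bool), ∀ j, j ≠ i →
      DependsOnVar (fun x => f (Function.update x i ℓ)) j := by
  classical
  by_contra hcon
  push_neg at hcon
  set D : Fin n → Bool → Finset (Fin n) := fun i ℓ =>
    Finset.univ.filter (fun j => j ≠ i ∧ DependsOnVar (fun x => f (Function.update x i ℓ)) j)
    with hD
  obtain ⟨p, -, hmax⟩ := Finset.exists_max_image (Finset.univ : Finset (Fin n × Bool))
      (fun p => (D p.1 p.2).card) ⟨(⟨0, hn⟩, true), Finset.mem_univ _⟩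
  obtain ⟨i, ℓ⟩ := p
  obtain ⟨j, hji, hjind⟩ := hcon i ℓ
  -- independence of coordinate j in f restricted with i := ℓ
  have h1 : ∀ y, f (Function.update (Function.update y j true) i ℓ)
      = f (Function.update (Function.update y j false) i ℓ) := by
    intro y
    by_contra h
    exact hjind ⟨y, h⟩
  have hind : ∀ (x : Fin n → Bool) (b : Bool),
      f (Function.update (Function.update x j b) i ℓ) = f (Function.update x i ℓ) := by
    intro x b
    have h2 : f (Function.update (Function.update x j b) i ℓ)
        = f (Function.update (Function.update x j (x j)) i ℓ) := by
      cases b <;> rcases Bool.eq_false_or_eq_true (x j) with h | h <;> rw [h] <;>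
        first | rfl | exact (h1 x).symm | exact h1 x
    rwa [Function.update_eq_self] at h2
  obtain ⟨x1, hx1⟩ := hdep i
  set m0 := x1 j with hm0
  -- insert i (D i ℓ) ⊆ D j m0
  have hij : i ≠ j := Ne.symm hji
  have hss : insert i (D i ℓ) ⊆ D j m0 := by
    intro k hk
    rcases Finset.mem_insert.mp hk with rfl | hk
    · refine Finset.mem_filter.mpr ⟨Finset.mem_univ _, hij, ⟨x1, ?_⟩⟩
      have he : ∀ b : Bool, Function.update (Function.update x1 k b) j m0
          = Function.update x1 k b := by
        intro b
        rw [Function.update_comm hij, hm0, Function.update_eq_self]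
      simp only [he]
      exact hx1
    · obtain ⟨-, hki, x, hx⟩ := Finset.mem_filter.mp hk
      have hkj : k ≠ j := by
        rintro rfl
        exact hjind ⟨x, hx⟩
      refine Finset.mem_filter.mpr ⟨Finset.mem_univ _, hkj, ⟨Function.update x i ℓ, ?_⟩⟩
      have he : ∀ b : Bool,
          f (Function.update (Function.update (Function.update x i ℓ) k b) j m0)
          = f (Function.update (Function.update x k b) i ℓ) := by
        intro b
        rw [Function.update_comm (Ne.symm hki), Function.update_comm hij]
        exact hind (Function.update x k b) m0
      simp only [he]
      exact hx
  have hni : i ∉ D i ℓ := by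
    intro h
    exact (Finset.mem_filter.mp h).2.1 rfl
  have h3 : (D i ℓ).card + 1 ≤ (D j m0).card := by
    have := Finset.card_insert_of_notMem hni
    have := Finset.card_le_card hss
    omega
  have h4 : (D j m0).card ≤ (D i ℓ).card := hmax (j, m0) (Finset.mem_univ _)
  omega
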